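/- For a nonnegative integer n and a complex number b (avoiding zero denominators), ∑_{k=0}^n [(-n)_k (3b/2)_k ((1+3b)/2)_k / (k! (3b)_k (b-(n-2)/3)_k)] (4/3)^k equals (1/3)_{n/3} (2/3)_{n/3} / ((1/3-b)_{n/3} (2/3+b)_{n/3}) if 3 divides n, and 0 otherwise. -/

import Mathlib

open Finset

noncomputable def poch (x : ℂ) (m : ℕ) : ℂ := ∏ j ∈ Finset.range m, (x + (j : ℂ))

noncomputable def qpoch (x q : ℂ) (m : ℕ) : ℂ := ∏ i ∈ Finset.range m, (1 - x * q ^ i)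

lemma poch_zero (x : ℂ) : poch x 0 = 1 := Finset.prod_range_zero _

lemma poch_succ (x : ℂ) (k : ℕ) : poch x (k+1) = poch x k * (x + k) :=
  Finset.prod_range_succ _ _

lemma poch_succ' (x : ℂ) (k : ℕ) : poch x (k+1) = x * poch (x+1) k := by
  rw [poch, Finset.prod_range_succ']
  simp only [Nat.cast_zero, add_zero, Nat.cast_add, Nat.cast_one]
  rw [mul_comm]
  congr 1
  exact Finset.prod_congr rfl (fun j _ => by ring)

lemma poch_shift' (y : ℂ) (k : ℕ) : poch y k * (y + k) = y * poch (y+1) k := by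
  rw [← poch_succ, poch_succ']

lemma poch_factor_ne_zero {x : ℂ} {m : ℕ} (h : poch x m ≠ 0) {j : ℕ} (hj : j < m) :
    x + j ≠ 0 := fun h0 => h (Finset.prod_eq_zero (Finset.mem_range.2 hj) h0)

lemma poch_mono_ne {x : ℂ} {t m : ℕ} (h : poch x m ≠ 0) (hle : t ≤ m) : poch x t ≠ 0 := by
  intro h0
  obtain ⟨j, hj, hz⟩ := Finset.prod_eq_zero_iff.1 h0
  exact h (Finset.prod_eq_zero (Finset.mem_range.2 (lt_of_lt_of_le (Finset.mem_range.1 hj) hle)) hz)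

lemma poch_neg_nat_eq_zero {n k : ℕ} (h : n < k) : poch (-(n:ℂ)) k = 0 :=
  Finset.prod_eq_zero (Finset.mem_range.2 h) (by simp)

lemma poch_chain (ν : ℂ) (k : ℕ) :
    poch (-ν-3) k * (((k:ℂ)-ν-3)*((k:ℂ)-ν-2)*((k:ℂ)-ν-1))
      = (-ν-3)*(-ν-2)*(-ν-1) * poch (-ν) k := by
  have h1 := poch_shift' (-ν-3) k
  have h2 := poch_shift' (-ν-2) k
  have h3 := poch_shift' (-ν-1) k
  have e1 : -ν-3+1 = -ν-2 := by ring
  have e2 : -ν-2+1 = -ν-1 := by ring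
  have e3 : -ν-1+1 = -ν := by ring
  rw [e1] at h1; rw [e2] at h2; rw [e3] at h3
  linear_combination (((k:ℂ)-ν-2)*((k:ℂ)-ν-1)) * h1 + ((-ν-3)*((k:ℂ)-ν-1)) * h2
    + ((-ν-3)*(-ν-2)) * h3

noncomputable def trm (n k : ℕ) (b : ℂ) : ℂ :=
  poch (-(n:ℂ)) k * poch (3*b/2) k * poch ((1+3*b)/2) k * (4/3)^k /
    ((Nat.factorial k : ℂ) * poch (3*b) k * poch (b - ((n:ℂ)-2)/3) k)

lemma canc1 (c n d r : ℂ) (hd : d ≠ 0) : c*(n/d) * (d*r) = c*n*r := by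
  field_simp

lemma canc3 (c n d s q p : ℂ) (hd : d ≠ 0) (hs : s ≠ 0) :
    c*(n/d)/s * (q*(p*(d*s))) = c*n*(q*p) := by
  field_simp

lemma canc4 (c n d s q p : ℂ) (hd : d ≠ 0) (hs : s ≠ 0) :
    c*(n/d)/s * (d*(q*(p*s))) = c*n*(q*p) := by
  field_simp

lemma canc0 (n d r : ℂ) (hd : d ≠ 0) : (n/d) * (d*r) = n*r := by
  field_simp

set_option maxHeartbeats 4000000 in
lemma step (m k : ℕ) (b : ℂ)
    (hden : ∀ j ≤ m+3, poch (3*b) j ≠ 0 ∧ poch (b - ((m:ℂ)+1)/3) j ≠ 0)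
    (hk : k ≤ m+2) :
    ((m:ℂ)+1-3*b)*((m:ℂ)+2+3*b) * trm (m+3) k b - ((m:ℂ)+1)*((m:ℂ)+2) * trm m k b
    = (-(((k:ℕ)+1 : ℕ):ℂ)*((((k:ℕ)+1 : ℕ):ℂ)-1+3*b)*((m:ℂ)+1-3*b) * trm (m+3) (k+1) b / ((m:ℂ)+3))
      - (-(k:ℂ)*((k:ℂ)-1+3*b)*((m:ℂ)+1-3*b) * trm (m+3) k b / ((m:ℂ)+3)) := by
  have hE1 : poch (3*b) (k+1) ≠ 0 := (hden (k+1) (by omega)).1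
  have hG1 : poch (b - ((m:ℂ)+1)/3) (k+1) ≠ 0 := (hden (k+1) (by omega)).2
  have hE : poch (3*b) k ≠ 0 := poch_mono_ne hE1 (Nat.le_succ k)
  have hG : poch (b - ((m:ℂ)+1)/3) k ≠ 0 := poch_mono_ne hG1 (Nat.le_succ k)
  have hg : (b - ((m:ℂ)+1)/3) ≠ 0 := by
    have := poch_factor_ne_zero hG1 (Nat.succ_pos k)
    simpa using this
  have hgk : (b - ((m:ℂ)+1)/3) + k ≠ 0 := poch_factor_ne_zero hG1 (Nat.lt_succ_self k)
  have hek : 3*b + k ≠ 0 := poch_factor_ne_zero hE1 (Nat.lt_succ_self k)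
  have hfac : ((Nat.factorial k : ℕ) : ℂ) ≠ 0 := Nat.cast_ne_zero.2 (Nat.factorial_ne_zero k)
  have hm1 : (m:ℂ)+1 ≠ 0 := by
    have : ((m+1 : ℕ) : ℂ) ≠ 0 := Nat.cast_ne_zero.2 (by omega)
    push_cast at this; exact this
  have hm2 : (m:ℂ)+2 ≠ 0 := by
    have : ((m+2 : ℕ) : ℂ) ≠ 0 := Nat.cast_ne_zero.2 (by omega)
    push_cast at this; exact this
  have hm3 : (m:ℂ)+3 ≠ 0 := by
    have : ((m+3 : ℕ) : ℂ) ≠ 0 := Nat.cast_ne_zero.2 (by omega)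
    push_cast at this; exact this
  have hv1 : -(m:ℂ)-1 ≠ 0 := fun h0 => hm1 (by linear_combination -h0)
  have hv2 : -(m:ℂ)-2 ≠ 0 := fun h0 => hm2 (by linear_combination -h0)
  have hv3 : -(m:ℂ)-3 ≠ 0 := fun h0 => hm3 (by linear_combination -h0)
  have hV : (-(m:ℂ)-3)*(-(m:ℂ)-2)*(-(m:ℂ)-1) ≠ 0 := mul_ne_zero (mul_ne_zero hv3 hv2) hv1
  have hk1 : (k:ℂ)+1 ≠ 0 := by
    have : ((k+1 : ℕ) : ℂ) ≠ 0 := Nat.cast_ne_zero.2 (by omega)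
    push_cast at this; exact this
  have ecast : ((m+3:ℕ):ℂ) = (m:ℂ)+3 := by push_cast; ring
  have e1' : -((m:ℂ)+3) = -(m:ℂ)-3 := by ring
  have e2' : b - (((m:ℂ)+3)-2)/3 = b - ((m:ℂ)+1)/3 := by ring
  have hFk0 := poch_shift' (b - ((m:ℂ)+1)/3) k
  have harg : (b - ((m:ℂ)+1)/3) + 1 = b - ((m:ℂ)-2)/3 := by ring
  rw [harg] at hFk0
  have hchain := poch_chain (m:ℂ) k
  have hD1 : ((Nat.factorial k : ℕ):ℂ) * poch (3*b) k * poch (b - ((m:ℂ)+1)/3) k ≠ 0 :=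
    mul_ne_zero (mul_ne_zero hfac hE) hG
  have hD2 : ((-(m:ℂ)-3)*(-(m:ℂ)-2)*(-(m:ℂ)-1))
      * (((Nat.factorial k : ℕ):ℂ) * poch (3*b) k * poch (b - ((m:ℂ)+1)/3) k
          * ((b - ((m:ℂ)+1)/3) + k)) ≠ 0 :=
    mul_ne_zero hV (mul_ne_zero hD1 hgk)
  have hD3 : (((Nat.factorial k : ℕ):ℂ) * ((k:ℂ)+1)) * (poch (3*b) k * (3*b+k))
      * (poch (b - ((m:ℂ)+1)/3) k * ((b - ((m:ℂ)+1)/3) + k)) ≠ 0 :=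
    mul_ne_zero (mul_ne_zero (mul_ne_zero hfac hk1) (mul_ne_zero hE hek)) (mul_ne_zero hG hgk)
  have etrm3k : trm (m+3) k b
      = poch (-(m:ℂ)-3) k * poch (3*b/2) k * poch ((1+3*b)/2) k * (4/3)^k
        / (((Nat.factorial k : ℕ):ℂ) * poch (3*b) k * poch (b - ((m:ℂ)+1)/3) k) := by
    simp only [trm, ecast, e1', e2']
  have etrmm : trm m k b
      = poch (-(m:ℂ)-3) k * (((k:ℂ)-(m:ℂ)-3)*((k:ℂ)-(m:ℂ)-2)*((k:ℂ)-(m:ℂ)-1))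
          * poch (3*b/2) k * poch ((1+3*b)/2) k * (4/3)^k * (b - ((m:ℂ)+1)/3)
        / (((-(m:ℂ)-3)*(-(m:ℂ)-2)*(-(m:ℂ)-1))
            * (((Nat.factorial k : ℕ):ℂ) * poch (3*b) k * poch (b - ((m:ℂ)+1)/3) k
                * ((b - ((m:ℂ)+1)/3) + k))) := by
    simp only [trm]
    have hDm : ((Nat.factorial k : ℕ):ℂ) * poch (3*b) k * poch (b - ((m:ℂ)-2)/3) k ≠ 0 := by
      apply mul_ne_zero (mul_ne_zero hfac hE)
      intro h0
      apply mul_ne_zero hG hgk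
      rw [hFk0, h0, mul_zero]
    rw [div_eq_div_iff hDm hD2]
    linear_combination
      (poch (3*b/2) k * poch ((1+3*b)/2) k * (4/3:ℂ)^k * (((Nat.factorial k : ℕ):ℂ) * poch (3*b) k)
        * ((-(m:ℂ)-3)*(-(m:ℂ)-2)*(-(m:ℂ)-1)) * poch (-(m:ℂ)) k) * hFk0
      - (poch (3*b/2) k * poch ((1+3*b)/2) k * (4/3:ℂ)^k * (((Nat.factorial k : ℕ):ℂ) * poch (3*b) k)
        * (b - ((m:ℂ)+1)/3) * poch (b - ((m:ℂ)-2)/3) k) * hchain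
  have etrm3k1 : trm (m+3) (k+1) b
      = (poch (-(m:ℂ)-3) k * ((-(m:ℂ)-3)+k)) * (poch (3*b/2) k * (3*b/2+k))
          * (poch ((1+3*b)/2) k * ((1+3*b)/2+k)) * ((4/3)^k*(4/3))
        / ((((Nat.factorial k : ℕ):ℂ) * ((k:ℂ)+1)) * (poch (3*b) k * (3*b+k))
            * (poch (b - ((m:ℂ)+1)/3) k * ((b - ((m:ℂ)+1)/3) + k))) := by
    simp only [trm, ecast, e1', e2', poch_succ, pow_succ, Nat.factorial_succ]
    push_cast
    congr 1
    ring
  rw [etrm3k, etrmm, etrm3k1]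
  set D1 := ((Nat.factorial k : ℕ):ℂ) * poch (3*b) k * poch (b - ((m:ℂ)+1)/3) k with hD1d
  set D2 := ((-(m:ℂ)-3)*(-(m:ℂ)-2)*(-(m:ℂ)-1))
      * (((Nat.factorial k : ℕ):ℂ) * poch (3*b) k * poch (b - ((m:ℂ)+1)/3) k
          * ((b - ((m:ℂ)+1)/3) + k)) with hD2d
  set D3 := (((Nat.factorial k : ℕ):ℂ) * ((k:ℂ)+1)) * (poch (3*b) k * (3*b+k))
      * (poch (b - ((m:ℂ)+1)/3) k * ((b - ((m:ℂ)+1)/3) + k)) with hD3d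
  apply mul_right_cancel₀ (b := D1*(D2*(D3*((m:ℂ)+3))))
    (mul_ne_zero hD1 (mul_ne_zero hD2 (mul_ne_zero hD3 hm3)))
  rw [sub_mul, sub_mul]
  rw [canc1 _ _ _ _ hD1]
  rw [show D1*(D2*(D3*((m:ℂ)+3))) = D2*(D1*(D3*((m:ℂ)+3))) by ring]
  rw [canc1 _ _ _ _ hD2]
  rw [show D2*(D1*(D3*((m:ℂ)+3))) = D1*(D2*(D3*((m:ℂ)+3))) by ring]
  conv_rhs => rw [sub_mul]
  rw [canc3 _ _ _ _ _ _ hD3 hm3]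
  rw [canc4 _ _ _ _ _ _ hD1 hm3]
  rw [hD1d, hD2d, hD3d]
  push_cast
  ring

set_option maxHeartbeats 1000000 in
lemma key (m : ℕ) (b : ℂ)
    (hden : ∀ j ≤ m+3, poch (3*b) j ≠ 0 ∧ poch (b - ((m:ℂ)+1)/3) j ≠ 0) :
    ((m:ℂ)+1-3*b)*((m:ℂ)+2+3*b) * ∑ k ∈ Finset.range (m+4), trm (m+3) k b
      = ((m:ℂ)+1)*((m:ℂ)+2) * ∑ k ∈ Finset.range (m+1), trm m k b := by
  have hm3 : (m:ℂ)+3 ≠ 0 := by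
    have : ((m+3 : ℕ) : ℂ) ≠ 0 := Nat.cast_ne_zero.2 (by omega)
    push_cast at this; exact this
  have hext : ∑ k ∈ Finset.range (m+1), trm m k b = ∑ k ∈ Finset.range (m+4), trm m k b := by
    apply Finset.sum_subset (Finset.range_subset_range.2 (by omega))
    intro k hk hnk
    have hklt : m < k := by
      simp only [Finset.mem_range] at hk hnk
      omega
    simp only [trm]
    rw [poch_neg_nat_eq_zero hklt]
    simp
  rw [hext, ← sub_eq_zero, Finset.mul_sum, Finset.mul_sum, ← Finset.sum_sub_distrib]
  have hstep : ∀ k ∈ Finset.range (m+4),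
      ((m:ℂ)+1-3*b)*((m:ℂ)+2+3*b) * trm (m+3) k b - ((m:ℂ)+1)*((m:ℂ)+2) * trm m k b
      = (fun j : ℕ => -(j:ℂ)*((j:ℂ)-1+3*b)*((m:ℂ)+1-3*b) * trm (m+3) j b / ((m:ℂ)+3)) (k+1)
        - (fun j : ℕ => -(j:ℂ)*((j:ℂ)-1+3*b)*((m:ℂ)+1-3*b) * trm (m+3) j b / ((m:ℂ)+3)) k := by
    intro k hk
    simp only []
    rcases Nat.lt_or_ge k (m+3) with hlt | hge
    · exact step m k b hden (by omega)
    · have hkeq : k = m+3 := by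
        simp only [Finset.mem_range] at hk
        omega
      subst hkeq
      have hz1 : trm m (m+3) b = 0 := by
        simp only [trm]
        rw [poch_neg_nat_eq_zero (show m < m+3 by omega)]
        simp
      have hz2 : trm (m+3) (m+3+1) b = 0 := by
        simp only [trm]
        rw [poch_neg_nat_eq_zero (show m+3 < m+3+1 by omega)]
        simp
      rw [hz1, hz2]
      push_cast
      simp only [mul_zero, zero_div, zero_sub]
      rw [eq_comm, neg_eq_iff_eq_neg, div_eq_iff hm3]
      ring
  rw [Finset.sum_congr rfl hstep, Finset.sum_range_sub
    (fun j : ℕ => -(j:ℂ)*((j:ℂ)-1+3*b)*((m:ℂ)+1-3*b) * trm (m+3) j b / ((m:ℂ)+3))]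
  have hz2 : trm (m+3) (m+4) b = 0 := by
    simp only [trm]
    rw [poch_neg_nat_eq_zero (show m+3 < m+4 by omega)]
    simp
  rw [hz2]
  simp

theorem stmt1 (n : ℕ) (b : ℂ)
    (hden : ∀ k ≤ n, poch (3*b) k ≠ 0 ∧ poch (b - ((n:ℂ)-2)/3) k ≠ 0)
    (hrhs : poch (1/3 - b) (n/3) ≠ 0 ∧ poch (2/3 + b) (n/3) ≠ 0) :
    ∑ k ∈ Finset.range (n+1),
      poch (-(n:ℂ)) k * poch (3*b/2) k * poch ((1+3*b)/2) k * (4/3)^k /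
        ((Nat.factorial k : ℂ) * poch (3*b) k * poch (b - ((n:ℂ)-2)/3) k)
    = if 3 ∣ n then
        poch (1/3) (n/3) * poch (2/3) (n/3) / (poch (1/3 - b) (n/3) * poch (2/3 + b) (n/3))
      else 0 := by
  revert hden hrhs
  induction n using Nat.strong_induction_on with
  | _ n IH =>
  rcases Nat.lt_or_ge n 3 with hn3 | hn3
  · interval_cases n
    · -- n = 0
      intro hden hrhs
      rw [if_pos (by norm_num : (3:ℕ) ∣ 0)]
      simp [Finset.sum_range_one, poch_zero]
    · -- n = 1
      intro hden hrhs
      rw [if_neg (by norm_num : ¬ (3:ℕ) ∣ 1)]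
      rw [Finset.sum_range_succ, Finset.sum_range_one]
      have p1 : ∀ x : ℂ, poch x 1 = x := by
        intro x
        rw [show (1:ℕ) = 0+1 from rfl, poch_succ, poch_zero]
        simp
      obtain ⟨hE1, hF1⟩ := hden 1 le_rfl
      rw [p1] at hE1 hF1
      simp only [poch_zero, p1, Nat.factorial_one, Nat.factorial_zero, Nat.cast_one, pow_zero,
        pow_one, one_mul, mul_one]
      push_cast at hE1 hF1
      have hD : 3*b * (b - ((1:ℂ)-2)/3) ≠ 0 := mul_ne_zero hE1 hF1
      have hv : -1 * (3 * b / 2) * ((1 + 3 * b) / 2) * (4 / 3) / (3 * b * (b - ((1:ℂ) - 2) / 3))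
          = -1 := by
        rw [div_eq_iff hD]; ring
      rw [hv]
      norm_num
    · -- n = 2
      intro hden hrhs
      rw [if_neg (by norm_num : ¬ (3:ℕ) ∣ 2)]
      rw [Finset.sum_range_succ, Finset.sum_range_succ, Finset.sum_range_one]
      have p1 : ∀ x : ℂ, poch x 1 = x := by
        intro x
        rw [show (1:ℕ) = 0+1 from rfl, poch_succ, poch_zero]
        simp
      have p2 : ∀ x : ℂ, poch x 2 = x * (x+1) := by
        intro x
        rw [show (2:ℕ) = 1+1 from rfl, poch_succ, p1]
        norm_num
      obtain ⟨hE1, hF1⟩ := hden 1 (by omega)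
      obtain ⟨hE2, hF2⟩ := hden 2 le_rfl
      rw [p1] at hE1 hF1
      rw [p2] at hE2 hF2
      push_cast at hE1 hF1 hE2 hF2
      simp only [poch_zero, p1, p2, Nat.factorial_one, Nat.factorial_zero, Nat.factorial_two,
        Nat.cast_one, Nat.cast_ofNat, pow_zero, pow_one, one_mul, mul_one]
      have hD1 : 3*b*(b - ((2:ℂ)-2)/3) ≠ 0 := mul_ne_zero hE1 hF1
      have hD2 : 2*(3*b*(3*b+1))*((b - ((2:ℂ)-2)/3)*(b - ((2:ℂ)-2)/3+1)) ≠ 0 :=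
        mul_ne_zero (mul_ne_zero two_ne_zero hE2) hF2
      rw [add_assoc]
      have hv : -2 * (3 * b / 2) * ((1 + 3 * b) / 2) * (4 / 3) / (3 * b * (b - ((2:ℂ) - 2) / 3)) +
          -2 * (-2 + 1) * (3 * b / 2 * (3 * b / 2 + 1)) * ((1 + 3 * b) / 2 * ((1 + 3 * b) / 2 + 1)) * (4 / 3) ^ 2 /
            (2 * (3 * b * (3 * b + 1)) * ((b - ((2:ℂ) - 2) / 3) * (b - ((2:ℂ) - 2) / 3 + 1))) = -1 := by
        rw [div_add_div _ _ hD1 hD2, div_eq_iff (mul_ne_zero hD1 hD2)]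
        ring
      rw [hv]
      norm_num
  · obtain ⟨m, rfl⟩ : ∃ m, n = m+3 := ⟨n-3, by omega⟩
    intro hden hrhs
    have ecastm : ((m+3:ℕ):ℂ) = (m:ℂ)+3 := by push_cast; ring
    have eargm : b - (((m+3:ℕ):ℂ)-2)/3 = b - ((m:ℂ)+1)/3 := by rw [ecastm]; ring
    have hdenM : ∀ j ≤ m+3, poch (3*b) j ≠ 0 ∧ poch (b - ((m:ℂ)+1)/3) j ≠ 0 := by
      intro j hj
      obtain ⟨h1, h2⟩ := hden j hj
      exact ⟨h1, by rwa [eargm] at h2⟩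
    have hkey := key m b hdenM
    show (∑ k ∈ Finset.range (m+3+1), trm (m+3) k b) = _
    rw [show m+3+1 = m+4 by omega]
    have hdenm : ∀ k ≤ m, poch (3*b) k ≠ 0 ∧ poch (b - ((m:ℂ)-2)/3) k ≠ 0 := by
      intro k hk
      refine ⟨(hdenM k (by omega)).1, ?_⟩
      have h2 := (hdenM (k+1) (by omega)).2
      rw [poch_succ'] at h2
      have h3 := (mul_ne_zero_iff.1 h2).2
      rwa [show b - ((m:ℂ)+1)/3 + 1 = b - ((m:ℂ)-2)/3 by ring] at h3
    have hdiv3 : (m+3)/3 = m/3 + 1 := by omega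
    rw [hdiv3] at hrhs
    obtain ⟨hr1, hr2⟩ := hrhs
    rw [poch_succ] at hr1 hr2
    have hr1' := (mul_ne_zero_iff.1 hr1).1
    have hr2' := (mul_ne_zero_iff.1 hr2).1
    have hy1 := (mul_ne_zero_iff.1 hr1).2
    have hy2 := (mul_ne_zero_iff.1 hr2).2
    have hSm : (∑ k ∈ Finset.range (m+1), trm m k b)
        = if 3 ∣ m then
            poch (1/3) (m/3) * poch (2/3) (m/3)
              / (poch (1/3 - b) (m/3) * poch (2/3 + b) (m/3))
          else 0 :=
      IH m (by omega) hdenm ⟨hr1', hr2'⟩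
    have hg0 : b - ((m:ℂ)+1)/3 ≠ 0 := by
      have h := (hdenM 1 (by omega)).2
      rw [poch_succ'] at h
      exact (mul_ne_zero_iff.1 h).1
    have hα1 : (m:ℂ)+1-3*b ≠ 0 := fun h0 => hg0 (by linear_combination (-1/3 : ℂ)*h0)
    have hα2 : (m:ℂ)+2+3*b ≠ 0 := by
      have h := (hdenM (m+3) le_rfl).1
      have h' := poch_factor_ne_zero h (show m+2 < m+3 by omega)
      intro h0
      apply h'
      push_cast
      linear_combination h0
    have hα : ((m:ℂ)+1-3*b)*((m:ℂ)+2+3*b) ≠ 0 := mul_ne_zero hα1 hα2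
    by_cases hd3 : 3 ∣ m
    · rw [if_pos (show 3 ∣ m+3 by omega)]
      rw [if_pos hd3] at hSm
      rw [hdiv3]
      rw [poch_succ (1/3) (m/3), poch_succ (2/3) (m/3), poch_succ (1/3 - b) (m/3),
        poch_succ (2/3 + b) (m/3)]
      have hcast : ((m/3:ℕ):ℂ) = (m:ℂ)/3 := by
        obtain ⟨t, rfl⟩ := hd3
        rw [Nat.mul_div_cancel_left t (by norm_num)]
        push_cast; ring
      apply mul_left_cancel₀ hα
      rw [hkey, hSm]
      have hDm : poch (1/3 - b) (m/3) * poch (2/3 + b) (m/3) ≠ 0 := mul_ne_zero hr1' hr2'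
      have hD' : (poch (1/3 - b) (m/3)*(1/3 - b + ((m/3:ℕ):ℂ)))
          *(poch (2/3 + b) (m/3)*(2/3 + b + ((m/3:ℕ):ℂ))) ≠ 0 :=
        mul_ne_zero (mul_ne_zero hr1' hy1) (mul_ne_zero hr2' hy2)
      apply mul_right_cancel₀ (b := (poch (1/3 - b) (m/3) * poch (2/3 + b) (m/3))
          *((poch (1/3 - b) (m/3)*(1/3 - b + ((m/3:ℕ):ℂ)))
            *(poch (2/3 + b) (m/3)*(2/3 + b + ((m/3:ℕ):ℂ)))))
        (mul_ne_zero hDm hD')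
      rw [canc1 _ _ _ _ hDm]
      rw [show (poch (1/3 - b) (m/3) * poch (2/3 + b) (m/3))
          *((poch (1/3 - b) (m/3)*(1/3 - b + ((m/3:ℕ):ℂ)))
            *(poch (2/3 + b) (m/3)*(2/3 + b + ((m/3:ℕ):ℂ))))
        = ((poch (1/3 - b) (m/3)*(1/3 - b + ((m/3:ℕ):ℂ)))
            *(poch (2/3 + b) (m/3)*(2/3 + b + ((m/3:ℕ):ℂ))))
          *(poch (1/3 - b) (m/3) * poch (2/3 + b) (m/3)) by ring]
      rw [canc1 _ _ _ _ hD']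
      rw [hcast]
      ring
    · rw [if_neg (show ¬ 3 ∣ m+3 by omega)]
      rw [if_neg hd3] at hSm
      rw [hSm, mul_zero] at hkey
      rcases mul_eq_zero.1 hkey with h | h
      · exact absurd h hα
      · exact h
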